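/- For every β > 0 and every continuous function η : ℝ≥0 → ℝ with η(0) ∈ [0, β], there exists a solution (χ, ζ₁, ζ₂) of the Skorokhod problem for η on [0, β]. -/

import Mathlib

open Set

namespace SkorokhodAux

variable (β : ℝ) (E : ℝ → ℝ)

/-- Chain sums: values `(E c₀ - β)⁺ + ∑ (E c_{2i+2} - E c_{2i+1} - β)⁺` over
monotone chains in `[0, t]`. -/
def SQ (t : ℝ) : Set ℝ :=
  {x | ∃ (m : ℕ) (c : ℕ → ℝ), (∀ i, c i ≤ c (i + 1)) ∧ (∀ i, 0 ≤ c i) ∧ (∀ i, c i ≤ t) ∧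
    x = max (E (c 0) - β) 0 +
      ∑ i ∈ Finset.range m, max (E (c (2 * i + 2)) - E (c (2 * i + 1)) - β) 0}

lemma sum_pairs_le (c : ℕ → ℝ) (hc : ∀ i, c i ≤ c (i + 1)) (m : ℕ) :
    ∑ i ∈ Finset.range m, (c (2 * i + 2) - c (2 * i + 1)) ≤ c (2 * m + 1) - c 1 := by
  have hmono : Monotone c := monotone_nat_of_le_succ hc
  induction m with
  | zero => simp
  | succ m ih =>
      rw [Finset.sum_range_succ]
      have h1 : c (2 * m + 1) ≤ c (2 * (m + 1) + 1) := hmono (by omega)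
      have h2 : c (2 * (m+1)) ≤ c (2*(m+1)+1) := hmono (by omega)
      have : (2:ℕ) * m + 2 = 2 * (m+1) := by ring
      rw [this]
      linarith

lemma const_mem_SQ (hβ : 0 < β) {t u : ℝ} (hu : 0 ≤ u) (hut : u ≤ t) :
    max (E u - β) 0 ∈ SQ β E t := by
  exact ⟨0, fun _ => u, fun _ => le_rfl, fun _ => hu, fun _ => hut, by simp⟩

lemma zero_mem_SQ (hβ : 0 < β) (h0 : E 0 ≤ β) {t : ℝ} (ht : 0 ≤ t) :
    (0 : ℝ) ∈ SQ β E t := by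
  have := const_mem_SQ β E hβ (le_refl (0:ℝ)) ht
  rwa [max_eq_right (by linarith)] at this

lemma bddAbove_SQ (hβ : 0 < β) (hE : Continuous E) {t : ℝ} (ht : 0 ≤ t) :
    BddAbove (SQ β E t) := by
  obtain ⟨C, hC⟩ := (isCompact_Icc (a := (0:ℝ)) (b := t)).exists_bound_of_continuousOn
    hE.continuousOn
  have hC0 : 0 ≤ C := le_trans (norm_nonneg _) (hC 0 ⟨le_rfl, ht⟩)
  obtain ⟨δ, hδ, hUC⟩ := (Metric.uniformContinuousOn_iff.mp
    ((isCompact_Icc (a := (0:ℝ)) (b := t)).uniformContinuousOn_of_continuous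
      hE.continuousOn)) β hβ
  refine ⟨C + (t / δ) * (2 * C), ?_⟩
  rintro x ⟨m, c, hc, hc0, hct, rfl⟩
  have hmono : Monotone c := monotone_nat_of_le_succ hc
  have hmem : ∀ i, c i ∈ Icc (0:ℝ) t := fun i => ⟨hc0 i, hct i⟩
  have habs : ∀ i, |E (c i)| ≤ C := fun i => by
    have := hC (c i) (hmem i); rwa [Real.norm_eq_abs] at this
  -- leading term
  have hlead : max (E (c 0) - β) 0 ≤ C := by
    have := habs 0
    have := abs_le.mp this
    apply max_le <;> linarith [this.2]
  -- each term bound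
  set K := Finset.filter (fun i => δ ≤ c (2 * i + 2) - c (2 * i + 1)) (Finset.range m) with hK
  have hterm : ∀ i ∈ Finset.range m,
      max (E (c (2 * i + 2)) - E (c (2 * i + 1)) - β) 0
        ≤ if δ ≤ c (2 * i + 2) - c (2 * i + 1) then 2 * C else 0 := by
    intro i _
    split_ifs with h
    · have h1 := abs_le.mp (habs (2 * i + 2))
      have h2 := abs_le.mp (habs (2 * i + 1))
      apply max_le <;> linarith [h1.2, h2.1]
    · push_neg at h
      have hdist : dist (E (c (2 * i + 2))) (E (c (2 * i + 1))) < β := by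
        apply hUC _ (hmem _) _ (hmem _)
        rw [Real.dist_eq, abs_of_nonneg (by linarith [hmono (show 2*i+1 ≤ 2*i+2 by omega)] :
          (0:ℝ) ≤ c (2*i+2) - c (2*i+1))]
        linarith
      rw [Real.dist_eq] at hdist
      have := abs_le.mp hdist.le
      apply max_le <;> linarith [this.2]
  have hsum : ∑ i ∈ Finset.range m, max (E (c (2 * i + 2)) - E (c (2 * i + 1)) - β) 0
      ≤ K.card * (2 * C) := by
    calc ∑ i ∈ Finset.range m, max (E (c (2 * i + 2)) - E (c (2 * i + 1)) - β) 0
        ≤ ∑ i ∈ Finset.range m, if δ ≤ c (2 * i + 2) - c (2 * i + 1) then 2 * C else 0 :=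
          Finset.sum_le_sum hterm
      _ = ∑ _i ∈ K, 2 * C := (Finset.sum_filter _ _).symm
      _ = K.card * (2 * C) := by rw [Finset.sum_const, nsmul_eq_mul]
  have hcard : (K.card : ℝ) * δ ≤ t := by
    have h1 : (K.card : ℝ) * δ = ∑ _i ∈ K, δ := by rw [Finset.sum_const, nsmul_eq_mul]
    have h2 : ∑ _i ∈ K, δ ≤ ∑ i ∈ K, (c (2 * i + 2) - c (2 * i + 1)) := by
      apply Finset.sum_le_sum
      intro i hi
      exact (Finset.mem_filter.mp hi).2
    have h3 : ∑ i ∈ K, (c (2 * i + 2) - c (2 * i + 1))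
        ≤ ∑ i ∈ Finset.range m, (c (2 * i + 2) - c (2 * i + 1)) := by
      apply Finset.sum_le_sum_of_subset_of_nonneg (Finset.filter_subset _ _)
      intro i _ _
      linarith [hmono (show 2*i+1 ≤ 2*i+2 by omega)]
    have h4 := sum_pairs_le c hc m
    have h5 : c (2 * m + 1) ≤ t := hct _
    have h6 : 0 ≤ c 1 := hc0 _
    linarith
  have hcard' : (K.card : ℝ) ≤ t / δ := by
    rw [le_div_iff₀ hδ]; exact hcard
  have : (K.card : ℝ) * (2 * C) ≤ (t / δ) * (2 * C) := by
    apply mul_le_mul_of_nonneg_right hcard' (by linarith)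
  linarith


noncomputable def Qf (t : ℝ) : ℝ := sSup (SQ β E t)

section Qf

variable {β E}
variable (hβ : 0 < β) (hE : Continuous E) (h0a : 0 ≤ E 0) (h0b : E 0 ≤ β)

include hβ hE h0b in
lemma Qf_nonneg {t : ℝ} (ht : 0 ≤ t) : 0 ≤ Qf β E t :=
  le_csSup (bddAbove_SQ β E hβ hE ht) (zero_mem_SQ β E hβ h0b ht)

include hβ hE h0b in
lemma Qf_mono {s t : ℝ} (hs : 0 ≤ s) (hst : s ≤ t) : Qf β E s ≤ Qf β E t := by
  apply csSup_le_csSup (bddAbove_SQ β E hβ hE (hs.trans hst)) ⟨0, zero_mem_SQ β E hβ h0b hs⟩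
  rintro x ⟨m, c, h1, h2, h3, rfl⟩
  exact ⟨m, c, h1, h2, fun i => (h3 i).trans hst, rfl⟩

include hβ hE in
lemma Qf_pair_le {t : ℝ} (ht : 0 ≤ t) : max (E t - β) 0 ≤ Qf β E t :=
  le_csSup (bddAbove_SQ β E hβ hE ht) (const_mem_SQ β E hβ ht le_rfl)

include hβ hE h0b in
lemma Qf_superadd {r s : ℝ} (hr : 0 ≤ r) (hrs : r ≤ s) :
    Qf β E r + max (E s - E r - β) 0 ≤ Qf β E s := by
  have key : ∀ x ∈ SQ β E r, x + max (E s - E r - β) 0 ≤ Qf β E s := by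
    rintro x ⟨m, c, h1, h2, h3, rfl⟩
    apply le_csSup (bddAbove_SQ β E hβ hE (hr.trans hrs))
    refine ⟨m + 1, fun i => if i ≤ 2 * m then c i else if i = 2 * m + 1 then r else s,
      ?_, ?_, ?_, ?_⟩
    · intro i
      simp only
      split_ifs
      all_goals first
        | (exfalso; omega)
        | exact h1 i
        | exact h3 i
        | exact hrs
        | exact le_rfl
        | exact (h3 i).trans hrs
    · intro i
      simp only
      split_ifs
      · exact h2 i
      · exact hr
      · exact hr.trans hrs
    · intro i
      simp only
      split_ifs
      · exact (h3 i).trans hrs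
      · exact hrs
      · exact le_rfl
    · simp only
      rw [Finset.sum_range_succ]
      have e0 : (if (0:ℕ) ≤ 2 * m then c 0 else if (0:ℕ) = 2*m+1 then r else s) = c 0 := by
        rw [if_pos (Nat.zero_le _)]
      have emid : ∀ i ∈ Finset.range m,
          max (E (if 2*i+2 ≤ 2*m then c (2*i+2) else if 2*i+2 = 2*m+1 then r else s)
            - E (if 2*i+1 ≤ 2*m then c (2*i+1) else if 2*i+1 = 2*m+1 then r else s) - β) 0
          = max (E (c (2*i+2)) - E (c (2*i+1)) - β) 0 := by
        intro i hi
        have hi' := Finset.mem_range.mp hi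
        rw [if_pos (by omega : 2*i+2 ≤ 2*m), if_pos (by omega : 2*i+1 ≤ 2*m)]
      rw [e0, Finset.sum_congr rfl emid,
        if_neg (by omega : ¬ 2*m+2 ≤ 2*m), if_neg (by omega : ¬ 2*m+2 = 2*m+1),
        if_neg (by omega : ¬ 2*m+1 ≤ 2*m), if_pos rfl]
      ring
  have : Qf β E r ≤ Qf β E s - max (E s - E r - β) 0 := by
    apply csSup_le ⟨0, zero_mem_SQ β E hβ h0b hr⟩
    intro x hx
    linarith [key x hx]
  linarith

end Qf


/-- One-sided lower regulator built on top of `Qf`. -/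
noncomputable def Pf (t : ℝ) : ℝ :=
  sSup (insert 0 ((fun s => Qf β E s - E s) '' Icc 0 t))

/-- The set of supersolution pairs. -/
def Sset : Set ((ℝ → ℝ) × (ℝ → ℝ)) :=
  {p | ∀ s t : ℝ, 0 ≤ s → s ≤ t →
    p.2 s - E s ≤ p.1 t ∧ 0 ≤ p.1 t ∧ E s + p.1 s - β ≤ p.2 t ∧ 0 ≤ p.2 t}

noncomputable def Z1 (t : ℝ) : ℝ := sInf {x | ∃ p ∈ Sset β E, p.1 t = x}
noncomputable def Z2 (t : ℝ) : ℝ := sInf {x | ∃ p ∈ Sset β E, p.2 t = x}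

section Main

variable {β E}
variable (hβ : 0 < β) (hE : Continuous E) (h0a : 0 ≤ E 0) (h0b : E 0 ≤ β)

include hβ hE h0b in
lemma bddAbove_PfSet {t : ℝ} (ht : 0 ≤ t) :
    BddAbove (insert 0 ((fun s => Qf β E s - E s) '' Icc (0:ℝ) t)) := by
  obtain ⟨C, hC⟩ := (isCompact_Icc (a := (0:ℝ)) (b := t)).exists_bound_of_continuousOn
    hE.continuousOn
  have hC0 : 0 ≤ C := le_trans (norm_nonneg _) (hC 0 ⟨le_rfl, ht⟩)
  refine ⟨Qf β E t + C, ?_⟩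
  rintro x (rfl | ⟨s, hs, rfl⟩)
  · have := Qf_nonneg hβ hE h0b ht; linarith
  · simp only
    have h1 : Qf β E s ≤ Qf β E t := Qf_mono hβ hE h0b hs.1 hs.2
    have h2 : |E s| ≤ C := by have := hC s hs; rwa [Real.norm_eq_abs] at this
    have := abs_le.mp h2
    linarith [this.1]

include hβ hE h0b in
lemma Pf_nonneg {t : ℝ} (ht : 0 ≤ t) : 0 ≤ Pf β E t :=
  le_csSup (bddAbove_PfSet hβ hE h0b ht) (mem_insert _ _)

include hβ hE h0b in
lemma Pf_ge {s t : ℝ} (hs : 0 ≤ s) (hst : s ≤ t) : Qf β E s - E s ≤ Pf β E t :=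
  le_csSup (bddAbove_PfSet hβ hE h0b (hs.trans hst))
    (mem_insert_of_mem _ ⟨s, ⟨hs, hst⟩, rfl⟩)

include hβ hE h0b in
lemma Pf_band {s t : ℝ} (hs : 0 ≤ s) (hst : s ≤ t) :
    E s + Pf β E s - β ≤ Qf β E t := by
  have : Pf β E s ≤ Qf β E t + β - E s := by
    apply csSup_le (insert_nonempty _ _)
    rintro x (rfl | ⟨r, hr, rfl⟩)
    · have h1 : max (E s - β) 0 ≤ Qf β E s := Qf_pair_le hβ hE hs
      have h2 : Qf β E s ≤ Qf β E t := Qf_mono hβ hE h0b hs hst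
      have := le_max_left (E s - β) 0
      linarith
    · simp only
      have h1 := Qf_superadd hβ hE h0b hr.1 hr.2
      have h2 : Qf β E s ≤ Qf β E t := Qf_mono hβ hE h0b hs hst
      have := le_max_left (E s - E r - β) 0
      linarith
  linarith

include hβ hE h0b in
lemma PQ_mem_Sset : (⟨Pf β E, Qf β E⟩ : (ℝ → ℝ) × (ℝ → ℝ)) ∈ Sset β E := by
  intro s t hs hst
  have ht : 0 ≤ t := hs.trans hst
  refine ⟨?_, Pf_nonneg hβ hE h0b ht, Pf_band hβ hE h0b hs hst, Qf_nonneg hβ hE h0b ht⟩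
  have := Pf_ge hβ hE h0b hs hst
  simpa using this

include hβ hE h0b in
lemma Sset_nonempty : (Sset β E).Nonempty :=
  ⟨_, PQ_mem_Sset hβ hE h0b⟩

include hβ hE h0b in
lemma Z1set_nonempty (t : ℝ) : {x | ∃ p ∈ Sset β E, p.1 t = x}.Nonempty :=
  ⟨_, _, PQ_mem_Sset hβ hE h0b, rfl⟩

include hβ hE h0b in
lemma Z2set_nonempty (t : ℝ) : {x | ∃ p ∈ Sset β E, p.2 t = x}.Nonempty :=
  ⟨_, _, PQ_mem_Sset hβ hE h0b, rfl⟩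

lemma Z1set_bddBelow {t : ℝ} (ht : 0 ≤ t) : BddBelow {x | ∃ p ∈ Sset β E, p.1 t = x} := by
  refine ⟨0, ?_⟩
  rintro x ⟨p, hp, rfl⟩
  exact (hp 0 t le_rfl ht).2.1

lemma Z2set_bddBelow {t : ℝ} (ht : 0 ≤ t) : BddBelow {x | ∃ p ∈ Sset β E, p.2 t = x} := by
  refine ⟨0, ?_⟩
  rintro x ⟨p, hp, rfl⟩
  exact (hp 0 t le_rfl ht).2.2.2

include hβ hE h0b in
lemma Z_mem_Sset : (⟨Z1 β E, Z2 β E⟩ : (ℝ → ℝ) × (ℝ → ℝ)) ∈ Sset β E := by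
  intro s t hs hst
  have ht : 0 ≤ t := hs.trans hst
  refine ⟨?_, ?_, ?_, ?_⟩
  · apply le_csInf (Z1set_nonempty hβ hE h0b t)
    rintro x ⟨p, hp, rfl⟩
    have h1 : Z2 β E s ≤ p.2 s := csInf_le (Z2set_bddBelow hs) ⟨p, hp, rfl⟩
    have h2 := (hp s t hs hst).1
    linarith
  · apply le_csInf (Z1set_nonempty hβ hE h0b t)
    rintro x ⟨p, hp, rfl⟩
    exact (hp 0 t le_rfl ht).2.1
  · apply le_csInf (Z2set_nonempty hβ hE h0b t)
    rintro x ⟨p, hp, rfl⟩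
    have h1 : Z1 β E s ≤ p.1 s := csInf_le (Z1set_bddBelow hs) ⟨p, hp, rfl⟩
    have h2 := (hp s t hs hst).2.2.1
    linarith
  · apply le_csInf (Z2set_nonempty hβ hE h0b t)
    rintro x ⟨p, hp, rfl⟩
    exact (hp 0 t le_rfl ht).2.2.2


end Main

/-- running sup giving the candidate fixed point equations -/
noncomputable def F1 (t : ℝ) : ℝ :=
  sSup ((fun s => max (Z2 β E s - E s) 0) '' Icc 0 t)

noncomputable def F2 (t : ℝ) : ℝ :=
  sSup ((fun s => max (E s + Z1 β E s - β) 0) '' Icc 0 t)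

section Main
variable {β E}
variable (hβ : 0 < β) (hE : Continuous E) (h0a : 0 ≤ E 0) (h0b : E 0 ≤ β)

include hβ hE h0b in
lemma bddAbove_F1set {a t : ℝ} (ha : 0 ≤ a) (ht : a ≤ t) (ht0 : 0 ≤ t) :
    BddAbove ((fun s => max (Z2 β E s - E s) 0) '' Icc a t) := by
  refine ⟨Z1 β E t, ?_⟩
  rintro x ⟨s, hs, rfl⟩
  have h := Z_mem_Sset hβ hE h0b s t (ha.trans hs.1) hs.2
  exact max_le h.1 h.2.1

include hβ hE h0b in
lemma bddAbove_F2set {a t : ℝ} (ha : 0 ≤ a) (ht : a ≤ t) (ht0 : 0 ≤ t) :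
    BddAbove ((fun s => max (E s + Z1 β E s - β) 0) '' Icc a t) := by
  refine ⟨Z2 β E t, ?_⟩
  rintro x ⟨s, hs, rfl⟩
  have h := Z_mem_Sset hβ hE h0b s t (ha.trans hs.1) hs.2
  exact max_le h.2.2.1 h.2.2.2

include hβ hE h0b in
lemma F_mem_Sset : (⟨F1 β E, F2 β E⟩ : (ℝ → ℝ) × (ℝ → ℝ)) ∈ Sset β E := by
  have hF2le : ∀ s : ℝ, 0 ≤ s → F2 β E s ≤ Z2 β E s := by
    intro s hs
    apply csSup_le (by exact ⟨_, ⟨0, ⟨le_rfl, hs⟩, rfl⟩⟩)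
    rintro x ⟨r, hr, rfl⟩
    have h := Z_mem_Sset hβ hE h0b r s hr.1 hr.2
    exact max_le h.2.2.1 h.2.2.2
  have hF1le : ∀ s : ℝ, 0 ≤ s → F1 β E s ≤ Z1 β E s := by
    intro s hs
    apply csSup_le (by exact ⟨_, ⟨0, ⟨le_rfl, hs⟩, rfl⟩⟩)
    rintro x ⟨r, hr, rfl⟩
    have h := Z_mem_Sset hβ hE h0b r s hr.1 hr.2
    exact max_le h.1 h.2.1
  intro s t hs hst
  have ht : 0 ≤ t := hs.trans hst
  refine ⟨?_, ?_, ?_, ?_⟩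
  · have h1 : F2 β E s ≤ Z2 β E s := hF2le s hs
    have h2 : max (Z2 β E s - E s) 0 ≤ F1 β E t :=
      le_csSup (bddAbove_F1set hβ hE h0b le_rfl ht ht) ⟨s, ⟨hs, hst⟩, rfl⟩
    have := le_max_left (Z2 β E s - E s) 0
    linarith
  · have h2 : max (Z2 β E 0 - E 0) 0 ≤ F1 β E t :=
      le_csSup (bddAbove_F1set hβ hE h0b le_rfl ht ht) ⟨0, ⟨le_rfl, ht⟩, rfl⟩
    have := le_max_right (Z2 β E 0 - E 0) 0
    linarith
  · have h1 : F1 β E s ≤ Z1 β E s := hF1le s hs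
    have h2 : max (E s + Z1 β E s - β) 0 ≤ F2 β E t :=
      le_csSup (bddAbove_F2set hβ hE h0b le_rfl ht ht) ⟨s, ⟨hs, hst⟩, rfl⟩
    have := le_max_left (E s + Z1 β E s - β) 0
    linarith
  · have h2 : max (E 0 + Z1 β E 0 - β) 0 ≤ F2 β E t :=
      le_csSup (bddAbove_F2set hβ hE h0b le_rfl ht ht) ⟨0, ⟨le_rfl, ht⟩, rfl⟩
    have := le_max_right (E 0 + Z1 β E 0 - β) 0
    linarith

include hβ hE h0b in
lemma Z1_eq_F1 {t : ℝ} (ht : 0 ≤ t) : Z1 β E t = F1 β E t := by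
  apply le_antisymm
  · exact csInf_le (Z1set_bddBelow ht) ⟨_, F_mem_Sset hβ hE h0b, rfl⟩
  · apply csSup_le (by exact ⟨_, ⟨0, ⟨le_rfl, ht⟩, rfl⟩⟩)
    rintro x ⟨r, hr, rfl⟩
    have h := Z_mem_Sset hβ hE h0b r t hr.1 hr.2
    exact max_le h.1 h.2.1

include hβ hE h0b in
lemma Z2_eq_F2 {t : ℝ} (ht : 0 ≤ t) : Z2 β E t = F2 β E t := by
  apply le_antisymm
  · exact csInf_le (Z2set_bddBelow ht) ⟨_, F_mem_Sset hβ hE h0b, rfl⟩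
  · apply csSup_le (by exact ⟨_, ⟨0, ⟨le_rfl, ht⟩, rfl⟩⟩)
    rintro x ⟨r, hr, rfl⟩
    have h := Z_mem_Sset hβ hE h0b r t hr.1 hr.2
    exact max_le h.2.2.1 h.2.2.2

include hβ hE h0b in
lemma Z1_mono {s t : ℝ} (hs : 0 ≤ s) (hst : s ≤ t) : Z1 β E s ≤ Z1 β E t := by
  rw [Z1_eq_F1 hβ hE h0b hs, Z1_eq_F1 hβ hE h0b (hs.trans hst)]
  refine csSup_le_csSup (bddAbove_F1set hβ hE h0b le_rfl (hs.trans hst) (hs.trans hst))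
    ?_ (image_mono (Icc_subset_Icc le_rfl hst))
  exact ⟨_, ⟨0, ⟨le_rfl, hs⟩, rfl⟩⟩

include hβ hE h0b in
lemma Z2_mono {s t : ℝ} (hs : 0 ≤ s) (hst : s ≤ t) : Z2 β E s ≤ Z2 β E t := by
  rw [Z2_eq_F2 hβ hE h0b hs, Z2_eq_F2 hβ hE h0b (hs.trans hst)]
  refine csSup_le_csSup (bddAbove_F2set hβ hE h0b le_rfl (hs.trans hst) (hs.trans hst))
    ?_ (image_mono (Icc_subset_Icc le_rfl hst))
  exact ⟨_, ⟨0, ⟨le_rfl, hs⟩, rfl⟩⟩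

include hβ hE h0a h0b in
lemma Z1_zero : Z1 β E 0 = 0 ∧ Z2 β E 0 = 0 := by
  have e1 : Z1 β E 0 = max (Z2 β E 0 - E 0) 0 := by
    rw [Z1_eq_F1 hβ hE h0b le_rfl]
    unfold F1
    rw [Icc_self, image_singleton, csSup_singleton]
  have e2 : Z2 β E 0 = max (E 0 + Z1 β E 0 - β) 0 := by
    rw [Z2_eq_F2 hβ hE h0b le_rfl]
    unfold F2
    rw [Icc_self, image_singleton, csSup_singleton]
  have ha : 0 ≤ Z1 β E 0 := (Z_mem_Sset hβ hE h0b 0 0 le_rfl le_rfl).2.1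
  have hb : 0 ≤ Z2 β E 0 := (Z_mem_Sset hβ hE h0b 0 0 le_rfl le_rfl).2.2.2
  have h1 : Z1 β E 0 = 0 := by
    by_contra h
    have hpos : 0 < Z1 β E 0 := lt_of_le_of_ne ha (Ne.symm h)
    have e1' : Z1 β E 0 = Z2 β E 0 - E 0 := by
      rcases max_cases (Z2 β E 0 - E 0) (0:ℝ) with ⟨h', _⟩ | ⟨h', _⟩
      · rw [e1, h']
      · rw [e1, h'] at hpos; exact absurd hpos (lt_irrefl 0)
    have hbpos : 0 < Z2 β E 0 := by linarith
    have e2' : Z2 β E 0 = E 0 + Z1 β E 0 - β := by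
      rcases max_cases (E 0 + Z1 β E 0 - β) (0:ℝ) with ⟨h', _⟩ | ⟨h', _⟩
      · rw [e2, h']
      · rw [e2, h'] at hbpos; exact absurd hbpos (lt_irrefl 0)
    linarith
  refine ⟨h1, ?_⟩
  rw [e2, h1]
  rw [max_eq_right (by linarith)]


include hβ hE h0b in
lemma Z_right_approx {t : ℝ} (ht : 0 ≤ t) {ε : ℝ} (hε : 0 < ε) :
    ∃ u, t < u ∧ Z1 β E u ≤ Z1 β E t + ε ∧ Z2 β E u ≤ Z2 β E t + ε := by
  set a := sInf (Z1 β E '' Ioc t (t + 1)) with ha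
  set b := sInf (Z2 β E '' Ioc t (t + 1)) with hb
  have hne : (Ioc t (t + 1)).Nonempty := ⟨t + 1, by constructor <;> linarith⟩
  have hne1 : (Z1 β E '' Ioc t (t + 1)).Nonempty := hne.image _
  have hne2 : (Z2 β E '' Ioc t (t + 1)).Nonempty := hne.image _
  have hbdd1 : BddBelow (Z1 β E '' Ioc t (t + 1)) := by
    refine ⟨Z1 β E t, ?_⟩
    rintro x ⟨u, hu, rfl⟩
    exact Z1_mono hβ hE h0b ht hu.1.le
  have hbdd2 : BddBelow (Z2 β E '' Ioc t (t + 1)) := by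
    refine ⟨Z2 β E t, ?_⟩
    rintro x ⟨u, hu, rfl⟩
    exact Z2_mono hβ hE h0b ht hu.1.le
  have haZ : Z1 β E t ≤ a := by
    apply le_csInf hne1
    rintro x ⟨u, hu, rfl⟩
    exact Z1_mono hβ hE h0b ht hu.1.le
  have hbZ : Z2 β E t ≤ b := by
    apply le_csInf hne2
    rintro x ⟨u, hu, rfl⟩
    exact Z2_mono hβ hE h0b ht hu.1.le
  have m1 : Z2 β E t - E t ≤ Z1 β E t := (Z_mem_Sset hβ hE h0b t t ht le_rfl).1
  have m2 : E t + Z1 β E t - β ≤ Z2 β E t := (Z_mem_Sset hβ hE h0b t t ht le_rfl).2.2.1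
  have hZ1t0 : 0 ≤ Z1 β E t := (Z_mem_Sset hβ hE h0b t t ht le_rfl).2.1
  have hZ2t0 : 0 ≤ Z2 β E t := (Z_mem_Sset hβ hE h0b t t ht le_rfl).2.2.2
  -- R1
  have R1 : a ≤ max (Z1 β E t) (max (b - E t) 0) := by
    apply le_of_forall_pos_le_add
    intro ε' hε'
    obtain ⟨x, ⟨u₀, hu₀, rfl⟩, hx⟩ :=
      exists_lt_of_csInf_lt hne2 (lt_add_of_pos_right b (by linarith : (0:ℝ) < ε' / 2))
    obtain ⟨δ, hδ, hδE⟩ := Metric.continuousAt_iff.mp (hE.continuousAt (x := t)) (ε' / 2) (by linarith)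
    set u := min u₀ (t + δ / 2) with hu
    have htu : t < u := lt_min hu₀.1 (by linarith)
    have hu0 : 0 ≤ u := ht.trans htu.le
    have huIoc : u ∈ Ioc t (t + 1) := ⟨htu, le_trans (min_le_left _ _) hu₀.2⟩
    have hsplit : Z1 β E u = max (Z1 β E t)
        (sSup ((fun s => max (Z2 β E s - E s) 0) '' Icc t u)) := by
      rw [Z1_eq_F1 hβ hE h0b hu0]
      unfold F1
      rw [← Set.Icc_union_Icc_eq_Icc ht htu.le, image_union,
        csSup_union (bddAbove_F1set hβ hE h0b le_rfl ht ht)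
          ⟨_, ⟨0, ⟨le_rfl, ht⟩, rfl⟩⟩
          (bddAbove_F1set hβ hE h0b ht htu.le hu0)
          ⟨_, ⟨t, ⟨le_rfl, htu.le⟩, rfl⟩⟩,
        show sSup ((fun s => max (Z2 β E s - E s) 0) '' Icc 0 t) = Z1 β E t from
          (Z1_eq_F1 hβ hE h0b ht).symm]
    have hpiece : sSup ((fun s => max (Z2 β E s - E s) 0) '' Icc t u)
        ≤ max (b - E t) 0 + ε' := by
      apply csSup_le (by exact ⟨_, ⟨t, ⟨le_rfl, htu.le⟩, rfl⟩⟩)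
      rintro x ⟨s, hs, rfl⟩
      have hs0 : 0 ≤ s := ht.trans hs.1
      have hZ2 : Z2 β E s ≤ Z2 β E u₀ :=
        Z2_mono hβ hE h0b hs0 (le_trans hs.2 (min_le_left _ _))
      have hdist : dist s t < δ := by
        rw [Real.dist_eq, abs_of_nonneg (by linarith [hs.1])]
        have h2 := hs.2
        have h3 : u ≤ t + δ / 2 := min_le_right _ _
        linarith
      have hEs : E t - ε' / 2 < E s := by
        have := hδE hdist
        rw [Real.dist_eq] at this
        have := abs_lt.mp this
        linarith [this.1]
      have : Z2 β E s - E s ≤ b - E t + ε' := by linarith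
      simp only
      apply max_le
      · apply le_trans this
        have := le_max_left (b - E t) (0:ℝ)
        linarith
      · have := le_max_right (b - E t) (0:ℝ)
        linarith
    have hau : a ≤ Z1 β E u := csInf_le hbdd1 ⟨u, huIoc, rfl⟩
    calc a ≤ Z1 β E u := hau
      _ ≤ max (Z1 β E t) (max (b - E t) 0 + ε') := by
          rw [hsplit]; exact max_le_max le_rfl hpiece
      _ ≤ max (Z1 β E t) (max (b - E t) 0) + ε' := by
          apply max_le
          · linarith [le_max_left (Z1 β E t) (max (b - E t) 0)]
          · linarith [le_max_right (Z1 β E t) (max (b - E t) 0)]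
  -- R2
  have R2 : b ≤ max (Z2 β E t) (max (E t + a - β) 0) := by
    apply le_of_forall_pos_le_add
    intro ε' hε'
    obtain ⟨x, ⟨u₀, hu₀, rfl⟩, hx⟩ :=
      exists_lt_of_csInf_lt hne1 (lt_add_of_pos_right a (by linarith : (0:ℝ) < ε' / 2))
    obtain ⟨δ, hδ, hδE⟩ := Metric.continuousAt_iff.mp (hE.continuousAt (x := t)) (ε' / 2) (by linarith)
    set u := min u₀ (t + δ / 2) with hu
    have htu : t < u := lt_min hu₀.1 (by linarith)
    have hu0 : 0 ≤ u := ht.trans htu.le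
    have huIoc : u ∈ Ioc t (t + 1) := ⟨htu, le_trans (min_le_left _ _) hu₀.2⟩
    have hsplit : Z2 β E u = max (Z2 β E t)
        (sSup ((fun s => max (E s + Z1 β E s - β) 0) '' Icc t u)) := by
      rw [Z2_eq_F2 hβ hE h0b hu0]
      unfold F2
      rw [← Set.Icc_union_Icc_eq_Icc ht htu.le, image_union,
        csSup_union (bddAbove_F2set hβ hE h0b le_rfl ht ht)
          ⟨_, ⟨0, ⟨le_rfl, ht⟩, rfl⟩⟩
          (bddAbove_F2set hβ hE h0b ht htu.le hu0)
          ⟨_, ⟨t, ⟨le_rfl, htu.le⟩, rfl⟩⟩,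
        show sSup ((fun s => max (E s + Z1 β E s - β) 0) '' Icc 0 t) = Z2 β E t from
          (Z2_eq_F2 hβ hE h0b ht).symm]
    have hpiece : sSup ((fun s => max (E s + Z1 β E s - β) 0) '' Icc t u)
        ≤ max (E t + a - β) 0 + ε' := by
      apply csSup_le (by exact ⟨_, ⟨t, ⟨le_rfl, htu.le⟩, rfl⟩⟩)
      rintro x ⟨s, hs, rfl⟩
      have hs0 : 0 ≤ s := ht.trans hs.1
      have hZ1 : Z1 β E s ≤ Z1 β E u₀ :=
        Z1_mono hβ hE h0b hs0 (le_trans hs.2 (min_le_left _ _))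
      have hdist : dist s t < δ := by
        rw [Real.dist_eq, abs_of_nonneg (by linarith [hs.1])]
        have h2 := hs.2
        have h3 : u ≤ t + δ / 2 := min_le_right _ _
        linarith
      have hEs : E s < E t + ε' / 2 := by
        have := hδE hdist
        rw [Real.dist_eq] at this
        have := abs_lt.mp this
        linarith [this.2]
      have : E s + Z1 β E s - β ≤ E t + a - β + ε' := by linarith
      simp only
      apply max_le
      · apply le_trans this
        have := le_max_left (E t + a - β) (0:ℝ)
        linarith
      · have := le_max_right (E t + a - β) (0:ℝ)
        linarith
    have hau : b ≤ Z2 β E u := csInf_le hbdd2 ⟨u, huIoc, rfl⟩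
    calc b ≤ Z2 β E u := hau
      _ ≤ max (Z2 β E t) (max (E t + a - β) 0 + ε') := by
          rw [hsplit]; exact max_le_max le_rfl hpiece
      _ ≤ max (Z2 β E t) (max (E t + a - β) 0) + ε' := by
          apply max_le
          · linarith [le_max_left (Z2 β E t) (max (E t + a - β) 0)]
          · linarith [le_max_right (Z2 β E t) (max (E t + a - β) 0)]
  -- R3
  have R3 : b - E t ≤ a := by
    have : ∀ ε' : ℝ, 0 < ε' → b - E t ≤ a + ε' := by
      intro ε' hε'
      obtain ⟨x, ⟨u₁, hu₁, rfl⟩, hx⟩ :=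
        exists_lt_of_csInf_lt hne1 (lt_add_of_pos_right a (by linarith : (0:ℝ) < ε' / 2))
      obtain ⟨δ, hδ, hδE⟩ := Metric.continuousAt_iff.mp (hE.continuousAt (x := t)) (ε' / 2) (by linarith)
      set u := min u₁ (t + δ / 2) with hu
      have htu : t < u := lt_min hu₁.1 (by linarith)
      have hu0 : 0 ≤ u := ht.trans htu.le
      have huIoc : u ∈ Ioc t (t + 1) := ⟨htu, le_trans (min_le_left _ _) hu₁.2⟩
      have h1 : Z1 β E u ≤ Z1 β E u₁ := Z1_mono hβ hE h0b hu0 (min_le_left _ _)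
      have h2 : b ≤ Z2 β E u := csInf_le hbdd2 ⟨u, huIoc, rfl⟩
      have h3 : Z2 β E u - E u ≤ Z1 β E u := (Z_mem_Sset hβ hE h0b u u hu0 le_rfl).1
      have hdist : dist u t < δ := by
        rw [Real.dist_eq, abs_of_nonneg (by linarith : (0:ℝ) ≤ u - t)]
        have h3' : u ≤ t + δ / 2 := min_le_right _ _
        linarith
      have hEu : E u < E t + ε' / 2 := by
        have := hδE hdist
        rw [Real.dist_eq] at this
        have := abs_lt.mp this
        linarith [this.2]
      linarith
    apply le_of_forall_pos_le_add this
  -- R4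
  have R4 : E t + a - β ≤ b := by
    have : ∀ ε' : ℝ, 0 < ε' → E t + a - β ≤ b + ε' := by
      intro ε' hε'
      obtain ⟨x, ⟨u₁, hu₁, rfl⟩, hx⟩ :=
        exists_lt_of_csInf_lt hne2 (lt_add_of_pos_right b (by linarith : (0:ℝ) < ε' / 2))
      obtain ⟨δ, hδ, hδE⟩ := Metric.continuousAt_iff.mp (hE.continuousAt (x := t)) (ε' / 2) (by linarith)
      set u := min u₁ (t + δ / 2) with hu
      have htu : t < u := lt_min hu₁.1 (by linarith)
      have hu0 : 0 ≤ u := ht.trans htu.le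
      have huIoc : u ∈ Ioc t (t + 1) := ⟨htu, le_trans (min_le_left _ _) hu₁.2⟩
      have h1 : Z2 β E u ≤ Z2 β E u₁ := Z2_mono hβ hE h0b hu0 (min_le_left _ _)
      have h2 : a ≤ Z1 β E u := csInf_le hbdd1 ⟨u, huIoc, rfl⟩
      have h3 : E u + Z1 β E u - β ≤ Z2 β E u := (Z_mem_Sset hβ hE h0b u u hu0 le_rfl).2.2.1
      have hdist : dist u t < δ := by
        rw [Real.dist_eq, abs_of_nonneg (by linarith : (0:ℝ) ≤ u - t)]
        have h3' : u ≤ t + δ / 2 := min_le_right _ _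
        linarith
      have hEu : E t - ε' / 2 < E u := by
        have := hδE hdist
        rw [Real.dist_eq] at this
        have := abs_lt.mp this
        linarith [this.1]
      linarith
    apply le_of_forall_pos_le_add this
  -- now conclude a = Z1 t, b = Z2 t
  have key : a ≤ Z1 β E t ∧ b ≤ Z2 β E t := by
    rcases le_or_gt a (Z1 β E t) with hA | hA
    · refine ⟨hA, ?_⟩
      rcases le_or_gt b (Z2 β E t) with hB | hB
      · exact hB
      · exfalso
        have hb0 : 0 < b := lt_of_le_of_lt hZ2t0 hB
        have : b ≤ max (E t + a - β) 0 := by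
          rcases max_cases (Z2 β E t) (max (E t + a - β) 0) with ⟨h', _⟩ | ⟨h', h''⟩
          · rw [h'] at R2; linarith
          · rw [h'] at R2; exact R2
        have : b ≤ E t + a - β := by
          rcases max_cases (E t + a - β) (0:ℝ) with ⟨h', _⟩ | ⟨h', _⟩
          · rwa [h'] at this
          · rw [h'] at this; linarith
        linarith
    · exfalso
      have ha0 : 0 < a := lt_of_le_of_lt hZ1t0 hA
      have h1 : a ≤ max (b - E t) 0 := by
        rcases max_cases (Z1 β E t) (max (b - E t) 0) with ⟨h', _⟩ | ⟨h', h''⟩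
        · rw [h'] at R1; linarith
        · rw [h'] at R1; exact R1
      have h2 : a ≤ b - E t := by
        rcases max_cases (b - E t) (0:ℝ) with ⟨h', _⟩ | ⟨h', _⟩
        · rwa [h'] at h1
        · rw [h'] at h1; linarith
      have hB : Z2 β E t < b := by linarith
      have hb0 : 0 < b := lt_of_le_of_lt hZ2t0 hB
      have h3 : b ≤ max (E t + a - β) 0 := by
        rcases max_cases (Z2 β E t) (max (E t + a - β) 0) with ⟨h', _⟩ | ⟨h', h''⟩
        · rw [h'] at R2; linarith
        · rw [h'] at R2; exact R2
      have h4 : b ≤ E t + a - β := by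
        rcases max_cases (E t + a - β) (0:ℝ) with ⟨h', _⟩ | ⟨h', _⟩
        · rwa [h'] at h3
        · rw [h'] at h3; linarith
      linarith
  -- extract u
  obtain ⟨x, ⟨u₁, hu₁, rfl⟩, hx1⟩ :=
    exists_lt_of_csInf_lt hne1 (show a < Z1 β E t + ε by linarith [key.1])
  obtain ⟨x, ⟨u₂, hu₂, rfl⟩, hx2⟩ :=
    exists_lt_of_csInf_lt hne2 (show b < Z2 β E t + ε by linarith [key.2])
  refine ⟨min u₁ u₂, lt_min hu₁.1 hu₂.1, ?_, ?_⟩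
  · have := Z1_mono hβ hE h0b (ht.trans (lt_min hu₁.1 hu₂.1).le) (min_le_left u₁ u₂)
    linarith
  · have := Z2_mono hβ hE h0b (ht.trans (lt_min hu₁.1 hu₂.1).le) (min_le_right u₁ u₂)
    linarith


include hβ hE h0b in
lemma Z_left_approx {t : ℝ} (ht : 0 < t) {ε : ℝ} (hε : 0 < ε) :
    (∃ v, 0 ≤ v ∧ v < t ∧ Z1 β E t - ε ≤ Z1 β E v) ∧
    (∃ v, 0 ≤ v ∧ v < t ∧ Z2 β E t - ε ≤ Z2 β E v) := by
  set t₀ := max (t - 1) 0 with ht₀def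
  have ht₀0 : 0 ≤ t₀ := le_max_right _ _
  have ht₀t : t₀ < t := max_lt (by linarith) ht
  set l₁ := sSup (Z1 β E '' Ico t₀ t) with hl₁def
  set l₂ := sSup (Z2 β E '' Ico t₀ t) with hl₂def
  have hne : (Ico t₀ t).Nonempty := ⟨t₀, le_rfl, ht₀t⟩
  have hne1 : (Z1 β E '' Ico t₀ t).Nonempty := hne.image _
  have hne2 : (Z2 β E '' Ico t₀ t).Nonempty := hne.image _
  have hbdd1 : BddAbove (Z1 β E '' Ico t₀ t) := by
    refine ⟨Z1 β E t, ?_⟩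
    rintro x ⟨u, hu, rfl⟩
    exact Z1_mono hβ hE h0b (ht₀0.trans hu.1) hu.2.le
  have hbdd2 : BddAbove (Z2 β E '' Ico t₀ t) := by
    refine ⟨Z2 β E t, ?_⟩
    rintro x ⟨u, hu, rfl⟩
    exact Z2_mono hβ hE h0b (ht₀0.trans hu.1) hu.2.le
  have hl₁t : l₁ ≤ Z1 β E t := by
    apply csSup_le hne1
    rintro x ⟨u, hu, rfl⟩
    exact Z1_mono hβ hE h0b (ht₀0.trans hu.1) hu.2.le
  have hl₂t : l₂ ≤ Z2 β E t := by
    apply csSup_le hne2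
    rintro x ⟨u, hu, rfl⟩
    exact Z2_mono hβ hE h0b (ht₀0.trans hu.1) hu.2.le
  have hl₁0 : 0 ≤ l₁ := le_trans (Z_mem_Sset hβ hE h0b t₀ t₀ ht₀0 le_rfl).2.1
    (le_csSup hbdd1 ⟨t₀, ⟨le_rfl, ht₀t⟩, rfl⟩)
  have hl₂0 : 0 ≤ l₂ := le_trans (Z_mem_Sset hβ hE h0b t₀ t₀ ht₀0 le_rfl).2.2.2
    (le_csSup hbdd2 ⟨t₀, ⟨le_rfl, ht₀t⟩, rfl⟩)
  have m1 : Z2 β E t - E t ≤ Z1 β E t := (Z_mem_Sset hβ hE h0b t t ht.le le_rfl).1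
  have m2 : E t + Z1 β E t - β ≤ Z2 β E t := (Z_mem_Sset hβ hE h0b t t ht.le le_rfl).2.2.1
  have hZ1le : ∀ s, 0 ≤ s → s < t → Z1 β E s ≤ l₁ := by
    intro s hs hst
    rcases le_or_gt t₀ s with h | h
    · exact le_csSup hbdd1 ⟨s, ⟨h, hst⟩, rfl⟩
    · exact le_trans (Z1_mono hβ hE h0b hs h.le)
        (le_csSup hbdd1 ⟨t₀, ⟨le_rfl, ht₀t⟩, rfl⟩)
  have hZ2le : ∀ s, 0 ≤ s → s < t → Z2 β E s ≤ l₂ := by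
    intro s hs hst
    rcases le_or_gt t₀ s with h | h
    · exact le_csSup hbdd2 ⟨s, ⟨h, hst⟩, rfl⟩
    · exact le_trans (Z2_mono hβ hE h0b hs h.le)
        (le_csSup hbdd2 ⟨t₀, ⟨le_rfl, ht₀t⟩, rfl⟩)
  -- L1
  have L1 : Z1 β E t ≤ max l₁ (max (Z2 β E t - E t) 0) := by
    rw [Z1_eq_F1 hβ hE h0b ht.le]
    apply csSup_le (by exact ⟨_, ⟨t, ⟨ht.le, le_rfl⟩, rfl⟩⟩)
    rintro x ⟨s, hs, rfl⟩
    rcases eq_or_lt_of_le hs.2 with h | h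
    · subst h
      exact le_trans (le_refl _) (le_max_right _ _)
    · simp only
      have h1 := (Z_mem_Sset hβ hE h0b s s hs.1 le_rfl).1
      have h2 := (Z_mem_Sset hβ hE h0b s s hs.1 le_rfl).2.1
      have h3 : Z1 β E s ≤ l₁ := hZ1le s hs.1 h
      exact le_trans (max_le (by linarith) (by linarith)) (le_max_left _ _)
  -- L2
  have L2 : Z2 β E t ≤ max l₂ (max (E t + Z1 β E t - β) 0) := by
    rw [Z2_eq_F2 hβ hE h0b ht.le]
    apply csSup_le (by exact ⟨_, ⟨t, ⟨ht.le, le_rfl⟩, rfl⟩⟩)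
    rintro x ⟨s, hs, rfl⟩
    rcases eq_or_lt_of_le hs.2 with h | h
    · subst h
      exact le_trans (le_refl _) (le_max_right _ _)
    · simp only
      have h1 := (Z_mem_Sset hβ hE h0b s s hs.1 le_rfl).2.2.1
      have h2 := (Z_mem_Sset hβ hE h0b s s hs.1 le_rfl).2.2.2
      have h3 : Z2 β E s ≤ l₂ := hZ2le s hs.1 h
      exact le_trans (max_le (by linarith) (by linarith)) (le_max_left _ _)
  -- L3
  have L3 : l₂ - E t ≤ l₁ := by
    apply le_of_forall_pos_le_add
    intro ε' hε'
    obtain ⟨x, ⟨s₁, hs₁, rfl⟩, hx⟩ :=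
      exists_lt_of_lt_csSup hne2 (show l₂ - ε' / 2 < l₂ by linarith)
    obtain ⟨δ, hδ, hδE⟩ := Metric.continuousAt_iff.mp (hE.continuousAt (x := t)) (ε' / 2)
      (by linarith)
    set s := max s₁ (t - δ / 2) with hs
    have hst : s < t := max_lt hs₁.2 (by linarith)
    have hs0 : 0 ≤ s := le_trans (ht₀0.trans hs₁.1) (le_max_left _ _)
    have hZ2s : Z2 β E s₁ ≤ Z2 β E s :=
      Z2_mono hβ hE h0b (ht₀0.trans hs₁.1) (le_max_left _ _)
    have hdist : dist s t < δ := by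
      rw [Real.dist_eq, abs_of_nonpos (by linarith : s - t ≤ 0)]
      have h3 : t - δ / 2 ≤ s := le_max_right _ _
      linarith
    have hEs : E s < E t + ε' / 2 := by
      have := hδE hdist
      rw [Real.dist_eq] at this
      have := abs_lt.mp this
      linarith [this.2]
    have h1 : Z2 β E s - E s ≤ Z1 β E s := (Z_mem_Sset hβ hE h0b s s hs0 le_rfl).1
    have h2 : Z1 β E s ≤ l₁ := hZ1le s hs0 hst
    linarith
  -- L4
  have L4 : E t + l₁ - β ≤ l₂ + β - β := by
    have : ∀ ε' : ℝ, 0 < ε' → E t + l₁ - β ≤ l₂ + ε' := by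
      intro ε' hε'
      obtain ⟨x, ⟨s₁, hs₁, rfl⟩, hx⟩ :=
        exists_lt_of_lt_csSup hne1 (show l₁ - ε' / 2 < l₁ by linarith)
      obtain ⟨δ, hδ, hδE⟩ := Metric.continuousAt_iff.mp (hE.continuousAt (x := t)) (ε' / 2)
        (by linarith)
      set s := max s₁ (t - δ / 2) with hs
      have hst : s < t := max_lt hs₁.2 (by linarith)
      have hs0 : 0 ≤ s := le_trans (ht₀0.trans hs₁.1) (le_max_left _ _)
      have hZ1s : Z1 β E s₁ ≤ Z1 β E s :=
        Z1_mono hβ hE h0b (ht₀0.trans hs₁.1) (le_max_left _ _)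
      have hdist : dist s t < δ := by
        rw [Real.dist_eq, abs_of_nonpos (by linarith : s - t ≤ 0)]
        have h3 : t - δ / 2 ≤ s := le_max_right _ _
        linarith
      have hEs : E t - ε' / 2 < E s := by
        have := hδE hdist
        rw [Real.dist_eq] at this
        have := abs_lt.mp this
        linarith [this.1]
      have h1 : E s + Z1 β E s - β ≤ Z2 β E s := (Z_mem_Sset hβ hE h0b s s hs0 le_rfl).2.2.1
      have h2 : Z2 β E s ≤ l₂ := hZ2le s hs0 hst
      linarith
    have := le_of_forall_pos_le_add this
    linarith
  have L4' : E t + l₁ - β ≤ l₂ := by linarith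
  -- conclude
  have key : Z1 β E t ≤ l₁ ∧ Z2 β E t ≤ l₂ := by
    rcases le_or_gt (Z1 β E t) l₁ with hA | hA
    · refine ⟨hA, ?_⟩
      rcases le_or_gt (Z2 β E t) l₂ with hB | hB
      · exact hB
      · exfalso
        have hb0 : 0 < Z2 β E t := lt_of_le_of_lt hl₂0 hB
        have h3 : Z2 β E t ≤ max (E t + Z1 β E t - β) 0 := by
          rcases max_cases l₂ (max (E t + Z1 β E t - β) 0) with ⟨h', _⟩ | ⟨h', h''⟩
          · rw [h'] at L2; linarith
          · rw [h'] at L2; exact L2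
        have h4 : Z2 β E t ≤ E t + Z1 β E t - β := by
          rcases max_cases (E t + Z1 β E t - β) (0:ℝ) with ⟨h', _⟩ | ⟨h', _⟩
          · rwa [h'] at h3
          · rw [h'] at h3; linarith
        linarith
    · exfalso
      have ha0 : 0 < Z1 β E t := lt_of_le_of_lt hl₁0 hA
      have h1 : Z1 β E t ≤ max (Z2 β E t - E t) 0 := by
        rcases max_cases l₁ (max (Z2 β E t - E t) 0) with ⟨h', _⟩ | ⟨h', h''⟩
        · rw [h'] at L1; linarith
        · rw [h'] at L1; exact L1
      have h2 : Z1 β E t = Z2 β E t - E t := by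
        rcases max_cases (Z2 β E t - E t) (0:ℝ) with ⟨h', _⟩ | ⟨h', _⟩
        · rw [h'] at h1; linarith
        · rw [h'] at h1; linarith
      rcases le_or_gt (Z2 β E t) l₂ with hB | hB
      · linarith
      · have hb0 : 0 < Z2 β E t := lt_of_le_of_lt hl₂0 hB
        have h3 : Z2 β E t ≤ max (E t + Z1 β E t - β) 0 := by
          rcases max_cases l₂ (max (E t + Z1 β E t - β) 0) with ⟨h', _⟩ | ⟨h', h''⟩
          · rw [h'] at L2; linarith
          · rw [h'] at L2; exact L2
        have h4 : Z2 β E t ≤ E t + Z1 β E t - β := by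
          rcases max_cases (E t + Z1 β E t - β) (0:ℝ) with ⟨h', _⟩ | ⟨h', _⟩
          · rwa [h'] at h3
          · rw [h'] at h3; linarith
        linarith
  constructor
  · obtain ⟨x, ⟨v, hv, rfl⟩, hx⟩ :=
      exists_lt_of_lt_csSup hne1 (show Z1 β E t - ε < l₁ by linarith [key.1])
    exact ⟨v, ht₀0.trans hv.1, hv.2, hx.le⟩
  · obtain ⟨x, ⟨v, hv, rfl⟩, hx⟩ :=
      exists_lt_of_lt_csSup hne2 (show Z2 β E t - ε < l₂ by linarith [key.2])
    exact ⟨v, ht₀0.trans hv.1, hv.2, hx.le⟩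


lemma contOn_of_mono (f : ℝ → ℝ)
    (hm : ∀ s t : ℝ, 0 ≤ s → s ≤ t → f s ≤ f t)
    (hr : ∀ t : ℝ, 0 ≤ t → ∀ ε : ℝ, 0 < ε → ∃ u, t < u ∧ f u ≤ f t + ε)
    (hl : ∀ t : ℝ, 0 < t → ∀ ε : ℝ, 0 < ε → ∃ v, 0 ≤ v ∧ v < t ∧ f t - ε ≤ f v) :
    ContinuousOn f (Set.Ici 0) := by
  intro t ht
  have ht' : (0:ℝ) ≤ t := ht
  rw [Metric.continuousWithinAt_iff]
  intro ε hε
  obtain ⟨u, hu1, hu2⟩ := hr t ht' (ε / 2) (by linarith)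
  rcases eq_or_lt_of_le ht' with h0 | h0
  · refine ⟨u - t, by linarith, ?_⟩
    intro y hy hyd
    rw [Real.dist_eq] at hyd ⊢
    have hy0 : (0:ℝ) ≤ y := hy
    have hyt : t ≤ y := h0 ▸ hy0
    have habs := abs_lt.mp hyd
    have hyu : y ≤ u := by linarith [habs.2]
    have l1 : f t ≤ f y := hm t y ht' hyt
    have l2 : f y ≤ f u := hm y u hy0 hyu
    rw [abs_lt]
    constructor <;> linarith
  · obtain ⟨v, hv0, hvt, hv2⟩ := hl t h0 (ε / 2) (by linarith)
    refine ⟨min (u - t) (t - v), lt_min (by linarith) (by linarith), ?_⟩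
    intro y hy hyd
    rw [Real.dist_eq] at hyd ⊢
    have hy0 : (0:ℝ) ≤ y := hy
    have habs := abs_lt.mp hyd
    rcases le_total y t with hyt | hyt
    · have hvy : v ≤ y := by
        have := min_le_right (u - t) (t - v)
        linarith [habs.1]
      have l1 : f v ≤ f y := hm v y hv0 hvy
      have l2 : f y ≤ f t := hm y t hy0 hyt
      rw [abs_lt]
      constructor <;> linarith
    · have hyu : y ≤ u := by
        have := min_le_left (u - t) (t - v)
        linarith [habs.2]
      have l1 : f t ≤ f y := hm t y ht' hyt
      have l2 : f y ≤ f u := hm y u hy0 hyu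
      rw [abs_lt]
      constructor <;> linarith

include hβ hE h0b in
lemma Z1_contOn : ContinuousOn (Z1 β E) (Set.Ici 0) := by
  apply contOn_of_mono
  · intro s t hs hst; exact Z1_mono hβ hE h0b hs hst
  · intro t ht ε hε
    obtain ⟨u, h1, h2, _⟩ := Z_right_approx hβ hE h0b ht hε
    exact ⟨u, h1, h2⟩
  · intro t ht ε hε
    exact (Z_left_approx hβ hE h0b ht hε).1

include hβ hE h0b in
lemma Z2_contOn : ContinuousOn (Z2 β E) (Set.Ici 0) := by
  apply contOn_of_mono
  · intro s t hs hst; exact Z2_mono hβ hE h0b hs hst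
  · intro t ht ε hε
    obtain ⟨u, h1, _, h2⟩ := Z_right_approx hβ hE h0b ht hε
    exact ⟨u, h1, h2⟩
  · intro t ht ε hε
    exact (Z_left_approx hβ hE h0b ht hε).2

include hβ hE h0b in
lemma Z1_flat {s t : ℝ} (hs : 0 ≤ s) (hst : s ≤ t)
    (hpos : ∀ u ∈ Icc s t, 0 < E u + Z1 β E u - Z2 β E u) :
    Z1 β E t = Z1 β E s := by
  by_contra hne
  have hlt : Z1 β E s < Z1 β E t :=
    lt_of_le_of_ne (Z1_mono hβ hE h0b hs hst) (Ne.symm hne)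
  have ht : 0 ≤ t := hs.trans hst
  have hsplit : Z1 β E t = max (Z1 β E s)
      (sSup ((fun u => max (Z2 β E u - E u) 0) '' Icc s t)) := by
    rw [Z1_eq_F1 hβ hE h0b ht]
    unfold F1
    rw [← Set.Icc_union_Icc_eq_Icc hs hst, image_union,
      csSup_union (bddAbove_F1set hβ hE h0b le_rfl hs hs)
        ⟨_, ⟨0, ⟨le_rfl, hs⟩, rfl⟩⟩
        (bddAbove_F1set hβ hE h0b hs hst ht)
        ⟨_, ⟨s, ⟨le_rfl, hst⟩, rfl⟩⟩,
      show sSup ((fun u => max (Z2 β E u - E u) 0) '' Icc 0 s) = Z1 β E s from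
        (Z1_eq_F1 hβ hE h0b hs).symm]
  -- the sup over the piece is attained
  have hcont : ContinuousOn (fun u => max (Z2 β E u - E u) 0) (Icc s t) := by
    have h2 : ContinuousOn (fun u => Z2 β E u - E u) (Icc s t) :=
      ((Z2_contOn hβ hE h0b).mono (fun u hu => hs.trans hu.1)).sub hE.continuousOn
    exact h2.sup continuousOn_const
  obtain ⟨u', hu'mem, hu'max⟩ := (isCompact_Icc (a := s) (b := t)).exists_isMaxOn
    ⟨s, le_rfl, hst⟩ hcont
  have hsup_eq : sSup ((fun u => max (Z2 β E u - E u) 0) '' Icc s t)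
      = max (Z2 β E u' - E u') 0 := by
    apply le_antisymm
    · apply csSup_le (by exact ⟨_, ⟨s, ⟨le_rfl, hst⟩, rfl⟩⟩)
      rintro x ⟨r, hr, rfl⟩
      exact hu'max hr
    · exact le_csSup (bddAbove_F1set hβ hE h0b hs hst ht) ⟨u', hu'mem, rfl⟩
  have heq : Z1 β E t = max (Z2 β E u' - E u') 0 := by
    rw [hsplit, hsup_eq, max_eq_right]
    rw [hsplit, hsup_eq] at hlt
    rcases max_cases (Z1 β E s) (max (Z2 β E u' - E u') 0) with ⟨h', _⟩ | ⟨h', h''⟩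
    · rw [h'] at hlt; exact absurd hlt (lt_irrefl _)
    · exact h''.le
  have hZ1s0 : 0 ≤ Z1 β E s := (Z_mem_Sset hβ hE h0b s s hs le_rfl).2.1
  have hpos' : 0 < Z1 β E t := lt_of_le_of_lt hZ1s0 hlt
  have heq2 : Z1 β E t = Z2 β E u' - E u' := by
    rcases max_cases (Z2 β E u' - E u') (0:ℝ) with ⟨h', _⟩ | ⟨h', _⟩
    · rw [heq, h']
    · rw [heq, h'] at hpos'; exact absurd hpos' (lt_irrefl _)
  have hu'0 : 0 ≤ u' := hs.trans hu'mem.1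
  have hmono := Z1_mono hβ hE h0b hu'0 hu'mem.2
  have := hpos u' hu'mem
  linarith

include hβ hE h0b in
lemma Z2_flat {s t : ℝ} (hs : 0 ≤ s) (hst : s ≤ t)
    (hlt' : ∀ u ∈ Icc s t, E u + Z1 β E u - Z2 β E u < β) :
    Z2 β E t = Z2 β E s := by
  by_contra hne
  have hlt : Z2 β E s < Z2 β E t :=
    lt_of_le_of_ne (Z2_mono hβ hE h0b hs hst) (Ne.symm hne)
  have ht : 0 ≤ t := hs.trans hst
  have hsplit : Z2 β E t = max (Z2 β E s)
      (sSup ((fun u => max (E u + Z1 β E u - β) 0) '' Icc s t)) := by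
    rw [Z2_eq_F2 hβ hE h0b ht]
    unfold F2
    rw [← Set.Icc_union_Icc_eq_Icc hs hst, image_union,
      csSup_union (bddAbove_F2set hβ hE h0b le_rfl hs hs)
        ⟨_, ⟨0, ⟨le_rfl, hs⟩, rfl⟩⟩
        (bddAbove_F2set hβ hE h0b hs hst ht)
        ⟨_, ⟨s, ⟨le_rfl, hst⟩, rfl⟩⟩,
      show sSup ((fun u => max (E u + Z1 β E u - β) 0) '' Icc 0 s) = Z2 β E s from
        (Z2_eq_F2 hβ hE h0b hs).symm]
  have hcont : ContinuousOn (fun u => max (E u + Z1 β E u - β) 0) (Icc s t) := by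
    have h2 : ContinuousOn (fun u => E u + Z1 β E u - β) (Icc s t) :=
      (hE.continuousOn.add ((Z1_contOn hβ hE h0b).mono (fun u hu => hs.trans hu.1))).sub
        continuousOn_const
    exact h2.sup continuousOn_const
  obtain ⟨u', hu'mem, hu'max⟩ := (isCompact_Icc (a := s) (b := t)).exists_isMaxOn
    ⟨s, le_rfl, hst⟩ hcont
  have hsup_eq : sSup ((fun u => max (E u + Z1 β E u - β) 0) '' Icc s t)
      = max (E u' + Z1 β E u' - β) 0 := by
    apply le_antisymm
    · apply csSup_le (by exact ⟨_, ⟨s, ⟨le_rfl, hst⟩, rfl⟩⟩)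
      rintro x ⟨r, hr, rfl⟩
      exact hu'max hr
    · exact le_csSup (bddAbove_F2set hβ hE h0b hs hst ht) ⟨u', hu'mem, rfl⟩
  have heq : Z2 β E t = max (E u' + Z1 β E u' - β) 0 := by
    rw [hsplit, hsup_eq, max_eq_right]
    rw [hsplit, hsup_eq] at hlt
    rcases max_cases (Z2 β E s) (max (E u' + Z1 β E u' - β) 0) with ⟨h', _⟩ | ⟨h', h''⟩
    · rw [h'] at hlt; exact absurd hlt (lt_irrefl _)
    · exact h''.le
  have hZ2s0 : 0 ≤ Z2 β E s := (Z_mem_Sset hβ hE h0b s s hs le_rfl).2.2.2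
  have hpos' : 0 < Z2 β E t := lt_of_le_of_lt hZ2s0 hlt
  have heq2 : Z2 β E t = E u' + Z1 β E u' - β := by
    rcases max_cases (E u' + Z1 β E u' - β) (0:ℝ) with ⟨h', _⟩ | ⟨h', _⟩
    · rw [heq, h']
    · rw [heq, h'] at hpos'; exact absurd hpos' (lt_irrefl _)
  have hu'0 : 0 ≤ u' := hs.trans hu'mem.1
  have hmono := Z2_mono hβ hE h0b hu'0 hu'mem.2
  have := hlt' u' hu'mem
  linarith

end Main


end SkorokhodAux

open SkorokhodAux

/-- A solution of the Skorokhod problem for a continuous path `η` on the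
interval `[0, β]`, as in Section 3.3 of the paper: `χ = η + ζ₁ − ζ₂` stays in
`[0, β]`, the regulators `ζ₁, ζ₂` are continuous, nondecreasing, start at `0`,
`ζ₁` increases only when `χ = 0` and `ζ₂` increases only when `χ = β`. -/
def IsSkorokhodSolution (β : ℝ) (η χ ζ₁ ζ₂ : ℝ → ℝ) : Prop :=
  ContinuousOn χ (Set.Ici 0) ∧ ContinuousOn ζ₁ (Set.Ici 0) ∧
  ContinuousOn ζ₂ (Set.Ici 0) ∧
  (∀ t : ℝ, 0 ≤ t → χ t = η t + ζ₁ t - ζ₂ t) ∧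
  (∀ t : ℝ, 0 ≤ t → χ t ∈ Set.Icc 0 β) ∧
  MonotoneOn ζ₁ (Set.Ici 0) ∧ MonotoneOn ζ₂ (Set.Ici 0) ∧
  ζ₁ 0 = 0 ∧ ζ₂ 0 = 0 ∧
  (∀ s t : ℝ, 0 ≤ s → s ≤ t → (∀ u ∈ Set.Icc s t, 0 < χ u) → ζ₁ t = ζ₁ s) ∧
  (∀ s t : ℝ, 0 ≤ s → s ≤ t → (∀ u ∈ Set.Icc s t, χ u < β) → ζ₂ t = ζ₂ s)

/-- Existence of a solution of the Skorokhod problem on `[0, β]` for every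
continuous input path starting in `[0, β]` (Section 3.3 of the paper). -/
theorem skorokhod_problem_exists
    (β : ℝ) (hβ : 0 < β) (η : ℝ → ℝ)
    (hη : ContinuousOn η (Set.Ici 0)) (hη0 : η 0 ∈ Set.Icc 0 β) :
    ∃ χ ζ₁ ζ₂ : ℝ → ℝ, IsSkorokhodSolution β η χ ζ₁ ζ₂ := by
  set E : ℝ → ℝ := fun t => η (max t 0) with hEdef
  have hE : Continuous E :=
    hη.comp_continuous (continuous_id.max continuous_const)
      (fun x => Set.mem_Ici.mpr (le_max_right x 0))
  have hE0 : E 0 = η 0 := by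
    simp [hEdef]
  have h0a : 0 ≤ E 0 := by rw [hE0]; exact hη0.1
  have h0b : E 0 ≤ β := by rw [hE0]; exact hη0.2
  have hEeq : ∀ t : ℝ, 0 ≤ t → E t = η t := by
    intro t ht
    simp only [hEdef, max_eq_left ht]
  refine ⟨fun t => E t + SkorokhodAux.Z1 β E t - SkorokhodAux.Z2 β E t,
    SkorokhodAux.Z1 β E, SkorokhodAux.Z2 β E, ?_, ?_, ?_, ?_, ?_, ?_, ?_, ?_, ?_, ?_, ?_⟩
  · exact (hE.continuousOn.add (Z1_contOn hβ hE h0b)).sub (Z2_contOn hβ hE h0b)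
  · exact Z1_contOn hβ hE h0b
  · exact Z2_contOn hβ hE h0b
  · intro t ht
    show E t + SkorokhodAux.Z1 β E t - SkorokhodAux.Z2 β E t
      = η t + SkorokhodAux.Z1 β E t - SkorokhodAux.Z2 β E t
    rw [hEeq t ht]
  · intro t ht
    have h1 := (Z_mem_Sset hβ hE h0b t t ht le_rfl).1
    have h2 := (Z_mem_Sset hβ hE h0b t t ht le_rfl).2.2.1
    refine ⟨?_, ?_⟩
    · show (0:ℝ) ≤ E t + SkorokhodAux.Z1 β E t - SkorokhodAux.Z2 β E t
      linarith
    · show E t + SkorokhodAux.Z1 β E t - SkorokhodAux.Z2 β E t ≤ β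
      linarith
  · intro a ha b hb hab
    exact Z1_mono hβ hE h0b ha hab
  · intro a ha b hb hab
    exact Z2_mono hβ hE h0b ha hab
  · exact (Z1_zero hβ hE h0a h0b).1
  · exact (Z1_zero hβ hE h0a h0b).2
  · intro s t hs hst hpos
    exact Z1_flat hβ hE h0b hs hst hpos
  · intro s t hs hst hlt
    exact Z2_flat hβ hE h0b hs hst hlt
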